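/- Assume Schanuel's conjecture. Let K ⊆ ℂ be a subfield whose transcendence degree over ℚ is a finite number d. Then for any complex numbers x₁,…,xₙ: lin.dim_K(x₁,…,xₙ, 2πi) + tr.deg(exp x₁,…, exp xₙ) − lin.dim_ℚ(x₁,…,xₙ, 2πi) ≥ −(d+1). (This expresses that, relative to the kernel 2πiℤ of exp, the predimension of any finite set is bounded below by −(d+1).) -/

import Mathlib

set_option synthInstance.maxHeartbeats 1000000
set_option maxHeartbeats 1000000

/-- The transcendence degree of an `F`-algebra `E`: the supremum of the cardinalities
of subsets of `E` that are algebraically independent over `F`. -/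
noncomputable def trdeg (F E : Type*) [CommRing F] [CommRing E] [Algebra F E] : Cardinal :=
  ⨆ s : {s : Set E // AlgebraicIndependent F ((↑) : s → E)}, Cardinal.mk s.1

/-- **Schanuel's conjecture**: for every `n` and all `ℚ`-linearly independent complex
numbers `z₁, …, zₙ`, the transcendence degree over `ℚ` of the field
`ℚ(z₁,…,zₙ, exp z₁,…, exp zₙ)` is at least `n`. -/
def SchanuelConjecture : Prop :=
  ∀ (n : ℕ) (z : Fin n → ℂ), LinearIndependent ℚ z →
    (n : Cardinal) ≤ trdeg ℚ ↥(IntermediateField.adjoin ℚ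
      (Set.range z ∪ Set.range fun i => Complex.exp (z i)))

open IntermediateField
universe u
variable {F E : Type u} [Field F] [Field E] [Algebra F E]

theorem my_isFractionRing (S : Set E) :
    letI : Algebra ↥(Algebra.adjoin F S) ↥(adjoin F S) :=
      (Subalgebra.inclusion (algebra_adjoin_le_adjoin F S)).toAlgebra
    IsFractionRing ↥(Algebra.adjoin F S) ↥(adjoin F S) := by
  letI : Algebra ↥(Algebra.adjoin F S) ↥(adjoin F S) :=
    (Subalgebra.inclusion (algebra_adjoin_le_adjoin F S)).toAlgebra
  have hcoe : ∀ (a : ↥(Algebra.adjoin F S)),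
      ((algebraMap ↥(Algebra.adjoin F S) ↥(adjoin F S) a : ↥(adjoin F S)) : E) = (a : E) :=
    fun a => rfl
  have hinj : Function.Injective (algebraMap ↥(Algebra.adjoin F S) ↥(adjoin F S)) := by
    intro a b h
    exact Subtype.ext (by rw [← hcoe a, ← hcoe b, h])
  have key : ∀ p : MvPolynomial S F,
      MvPolynomial.aeval (Subtype.val : S → E) p ∈ Algebra.adjoin F S := fun p => by
    have h2 := Algebra.adjoin_range_eq_range_aeval F (Subtype.val : S → E)
    rw [Subtype.range_coe] at h2
    rw [h2]
    exact ⟨p, rfl⟩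
  refine ⟨⟨?_, ?_, ?_⟩⟩
  · rintro ⟨y, hy⟩
    refine isUnit_iff_ne_zero.2 fun h => ?_
    exact (mem_nonZeroDivisors_iff_ne_zero.1 hy) (hinj (by simpa using h))
  · rintro ⟨z, hz⟩
    obtain ⟨r, s, hrs⟩ := (mem_adjoin_iff F z).1 hz
    by_cases h0 : MvPolynomial.aeval (Subtype.val : S → E) s = 0
    · refine ⟨⟨0, 1⟩, Subtype.ext ?_⟩
      have hz0 : z = 0 := by rw [hrs, h0, div_zero]
      push_cast
      rw [hz0, zero_mul]
    · refine ⟨⟨⟨_, key r⟩, ⟨⟨_, key s⟩, mem_nonZeroDivisors_iff_ne_zero.2 fun hh => h0 ?_⟩⟩,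
        Subtype.ext ?_⟩
      · exact congrArg Subtype.val hh
      · push_cast
        rw [hcoe, hcoe]
        show z * _ = _
        rw [hrs, div_mul_cancel₀ _ h0]
  · intro a b h
    exact ⟨1, by rw [hinj h]⟩

theorem isAlgebraic_adjoin_iff_ring (S : Set E) (x : E) :
    IsAlgebraic ↥(adjoin F S) x ↔ IsAlgebraic ↥(Algebra.adjoin F S) x := by
  letI : Algebra ↥(Algebra.adjoin F S) ↥(adjoin F S) :=
    (Subalgebra.inclusion (algebra_adjoin_le_adjoin F S)).toAlgebra
  haveI : IsScalarTower ↥(Algebra.adjoin F S) ↥(adjoin F S) E :=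
    IsScalarTower.of_algebraMap_eq (congrFun rfl)
  haveI := my_isFractionRing (F := F) S
  exact (IsFractionRing.isAlgebraic_iff ↥(Algebra.adjoin F S) ↥(adjoin F S) E).symm

theorem transcendental_adjoin_iff_ring (S : Set E) (x : E) :
    Transcendental ↥(adjoin F S) x ↔ Transcendental ↥(Algebra.adjoin F S) x :=
  not_congr (isAlgebraic_adjoin_iff_ring S x)

theorem alg_mono {S T : Set E} (h : S ⊆ T) {x : E} (hx : IsAlgebraic ↥(adjoin F S) x) :
    IsAlgebraic ↥(adjoin F T) x :=
  IsAlgebraic.tower_top_of_subalgebra_le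
    (show (adjoin F S).toSubalgebra ≤ (adjoin F T).toSubalgebra from adjoin.mono F S T h) hx

theorem alg_base_change' (S T : Set E) (x : E) :
    IsAlgebraic ↥(adjoin ↥(adjoin F S) T) x ↔ IsAlgebraic ↥(adjoin F (S ∪ T)) x := by
  rw [← adjoin_adjoin_left]
  exact Iff.rfl

theorem trans_base_change' (S T : Set E) (x : E) :
    Transcendental ↥(adjoin ↥(adjoin F S) T) x ↔ Transcendental ↥(adjoin F (S ∪ T)) x :=
  not_congr (alg_base_change' S T x)

theorem my_exchange {a b : E} (hab : IsAlgebraic ↥(adjoin F ({b} : Set E)) a)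
    (ha : Transcendental F a) : IsAlgebraic ↥(adjoin F ({a} : Set E)) b := by
  by_contra hb
  have hbF : Transcendental F b := fun halg =>
    hb (halg.extendScalars (algebraMap F ↥(adjoin F ({a} : Set E))).injective)
  have h1 : AlgebraicIndependent F (fun _ : Unit => a) :=
    algebraicIndependent_unique_type_iff.2 ha
  have hb' : Transcendental (Algebra.adjoin F (Set.range (fun _ : Unit => a))) b := by
    rw [Set.range_const]
    exact fun h => hb ((isAlgebraic_adjoin_iff_ring {a} b).2 h)
  have h2 : AlgebraicIndependent F (fun o : Option Unit => o.elim b (fun _ => a)) :=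
    (h1.option_iff_transcendental b).2 hb'
  have h3 : AlgebraicIndependent F (fun o : Option Unit => o.elim a (fun _ => b)) := by
    have h4 := h2.comp (Equiv.swap none (some ())) (Equiv.injective _)
    have he : ((fun o : Option Unit => o.elim b (fun _ => a)) ∘ (Equiv.swap none (some ())))
        = fun o : Option Unit => o.elim a (fun _ => b) := by
      funext o
      rcases o with _ | u
      · simp [Equiv.swap_apply_left]
      · rcases u; simp [Equiv.swap_apply_right]
    rwa [he] at h4
  have hbind : AlgebraicIndependent F (fun _ : Unit => b) :=
    algebraicIndependent_unique_type_iff.2 hbF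
  have h5 := (hbind.option_iff_transcendental a).1 h3
  rw [Set.range_const] at h5
  exact h5 ((isAlgebraic_adjoin_iff_ring {b} a).1 hab)

theorem algIndep_erase_transcendental {s : Set E} {a : E}
    (hs : AlgebraicIndependent F ((↑) : s → E)) (ha : a ∈ s) :
    Transcendental ↥(adjoin F (s \ {a})) a := by
  intro halg
  have halg' : IsAlgebraic ↥(Algebra.adjoin F (s \ {a})) a :=
    (isAlgebraic_adjoin_iff_ring _ a).1 halg
  have hrest : AlgebraicIndependent F ((↑) : (s \ {a} : Set E) → E) :=
    hs.mono Set.diff_subset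
  have hfam : AlgebraicIndependent F
      (fun o : Option (s \ {a} : Set E) => o.elim a Subtype.val) := by
    have hf : Function.Injective
        (fun o : Option (s \ {a} : Set E) => (o.elim ⟨a, ha⟩
          (fun x => ⟨x.1, x.2.1⟩) : s)) := by
      rintro (_ | x) (_ | y) h <;> simp only [Option.elim] at h
      · rfl
      · exact absurd (congrArg Subtype.val h).symm (by simpa using y.2.2)
      · exact absurd (congrArg Subtype.val h) (by simpa using x.2.2)
      · exact congrArg some (Subtype.ext (Subtype.mk_eq_mk.1 h))
    have h6 := hs.comp _ hf
    have he : ((↑) : s → E) ∘ (fun o : Option (s \ {a} : Set E) => (o.elim ⟨a, ha⟩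
          (fun x => ⟨x.1, x.2.1⟩) : s))
        = fun o : Option (s \ {a} : Set E) => o.elim a Subtype.val := by
      funext o; rcases o with _ | x <;> rfl
    rwa [he] at h6
  have h7 := (hrest.option_iff_transcendental a).1 hfam
  rw [Subtype.range_coe] at h7
  exact h7 halg'

theorem algIndep_insert {s : Set E} {a : E} (hs : AlgebraicIndependent F ((↑) : s → E))
    (ha : a ∉ s) (hT : Transcendental ↥(adjoin F s) a) :
    AlgebraicIndependent F (fun x : ↥(insert a s) => (x : E)) := by
  classical
  have hT' : Transcendental (Algebra.adjoin F (Set.range ((↑) : s → E))) a := by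
    rw [Subtype.range_coe]
    exact fun h => hT ((isAlgebraic_adjoin_iff_ring s a).2 h)
  convert ((hs.option_iff_transcendental a).2 hT').comp _ (Set.subtypeInsertEquivOption ha).injective
  rename_i x
  by_cases h : ↑x = a <;> simp [h, Set.subtypeInsertEquivOption]

theorem alg_trans_insert {S : Set E} {c x : E} (hc : IsAlgebraic ↥(adjoin F S) c)
    (hx : IsAlgebraic ↥(adjoin F (insert c S)) x) : IsAlgebraic ↥(adjoin F S) x := by
  have hx' : IsAlgebraic ↥(adjoin ↥(adjoin F S) ({c} : Set E)) x :=
    (alg_base_change' S {c} x).2 (by rwa [Set.union_singleton])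
  haveI h1 : Algebra.IsAlgebraic ↥(adjoin F S) ↥(adjoin ↥(adjoin F S) ({c} : Set E)) :=
    IntermediateField.isAlgebraic_adjoin_simple hc.isIntegral
  haveI h2 : Algebra.IsIntegral ↥(adjoin F S) ↥(adjoin ↥(adjoin F S) ({c} : Set E)) :=
    Algebra.isAlgebraic_iff_isIntegral.1 h1
  exact (isIntegral_trans x hx'.isIntegral).isAlgebraic

theorem my_steinitz {E : Type u} [Field E] [DecidableEq E] : ∀ (p : ℕ) (F : Type u) [Field F] [Algebra F E]
    (S u : Finset E),
    S.card ≤ p →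
    (∀ a ∈ u, Transcendental ↥(adjoin F ((u.erase a : Finset E) : Set E)) a) →
    (∀ a ∈ u, IsAlgebraic ↥(adjoin F (S : Set E)) a) →
    u.card ≤ p := by
  intro p
  induction p with
  | zero =>
    intro F _ _ S u hS hu halg
    rcases Finset.eq_empty_or_nonempty u with rfl | ⟨a, ha⟩
    · simp
    · have hS0 : S = ∅ := Finset.card_eq_zero.1 (Nat.le_zero.1 hS)
      refine absurd (alg_mono ?_ (halg a ha)) (hu a ha)
      simp [hS0]
  | succ p ih =>
    intro F _ _ S u hS hu halg
    classical
    rcases Finset.eq_empty_or_nonempty u with rfl | ⟨a, ha⟩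
    · simp
    let P : Finset E → Prop := fun T => IsAlgebraic ↥(adjoin F (T : Set E)) a
    have hPS : P S := halg a ha
    obtain ⟨T, hTmem, hTmin⟩ := Finset.exists_min_image (S.powerset.filter P) Finset.card
      ⟨S, Finset.mem_filter.2 ⟨Finset.mem_powerset_self S, hPS⟩⟩
    obtain ⟨hTS, hPT⟩ := Finset.mem_filter.1 hTmem
    rw [Finset.mem_powerset] at hTS
    have hTne : T.Nonempty := by
      rcases Finset.eq_empty_or_nonempty T with rfl | h
      · exact absurd (alg_mono (by simp) hPT) (hu a ha)
      · exact h
    obtain ⟨s, hsT⟩ := hTne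
    have hnot : ¬ P (T.erase s) := by
      intro hP
      have h1 : T.erase s ∈ S.powerset.filter P :=
        Finset.mem_filter.2 ⟨Finset.mem_powerset.2 ((Finset.erase_subset s T).trans hTS), hP⟩
      have h2 := hTmin _ h1
      rw [Finset.card_erase_of_mem hsT] at h2
      have := Finset.card_pos.2 ⟨s, hsT⟩
      omega
    have hcardT : 1 ≤ T.card := Finset.card_pos.2 ⟨s, hsT⟩
    -- a algebraic over (adjoin F (T.erase s))⟮s⟯
    have hPT' : IsAlgebraic ↥(adjoin F (((T.erase s : Finset E) : Set E) ∪ {s})) a := by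
      have : ((T : Finset E) : Set E) = ((T.erase s : Finset E) : Set E) ∪ {s} := by
        rw [Set.union_singleton, ← Finset.coe_insert, Finset.insert_erase hsT]
      have hPT2 : IsAlgebraic ↥(adjoin F ((T : Finset E) : Set E)) a := hPT
      rwa [this] at hPT2
    have hab : IsAlgebraic ↥(adjoin ↥(adjoin F ((T.erase s : Finset E) : Set E)) ({s} : Set E)) a :=
      (alg_base_change' _ _ _).2 hPT'
    have ha_trans : Transcendental ↥(adjoin F ((T.erase s : Finset E) : Set E)) a := hnot
    have hs_alg : IsAlgebraic ↥(adjoin F (((T.erase s : Finset E) : Set E) ∪ {a})) s :=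
      (alg_base_change' _ _ _).1 (my_exchange hab ha_trans)
    -- s algebraic over adjoin F ({a} ∪ S.erase s)
    have hs_alg2 : IsAlgebraic ↥(adjoin F (({a} : Set E) ∪ ((S.erase s : Finset E) : Set E))) s := by
      refine alg_mono ?_ hs_alg
      rintro y (hy | hy)
      · right
        rw [Finset.coe_erase] at hy ⊢
        exact ⟨hTS hy.1, hy.2⟩
      · left; exact hy
    -- apply IH over F' := adjoin F {a}
    have hcards : (S.erase s).card ≤ p := by
      rw [Finset.card_erase_of_mem (hTS hsT)]
      omega
    have h_indep : ∀ b ∈ u.erase a,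
        Transcendental ↥(adjoin ↥(adjoin F ({a} : Set E))
          (((u.erase a).erase b : Finset E) : Set E)) b := by
      intro b hb
      obtain ⟨hba, hbu⟩ := Finset.mem_erase.1 hb
      rw [trans_base_change']
      have hset : ({a} : Set E) ∪ (((u.erase a).erase b : Finset E) : Set E)
          = ((u.erase b : Finset E) : Set E) := by
        ext c
        simp only [Set.mem_union, Set.mem_singleton_iff, Finset.coe_erase, Set.mem_diff,
          Finset.mem_coe, Set.mem_singleton_iff]
        constructor
        · rintro (rfl | ⟨⟨hc1, hc2⟩, hc3⟩)
          · exact ⟨ha, fun h => hba h.symm⟩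
          · exact ⟨hc1, hc3⟩
        · rintro ⟨hc1, hc2⟩
          by_cases hca : c = a
          · exact Or.inl hca
          · exact Or.inr ⟨⟨hc1, hca⟩, hc2⟩
      rw [hset]
      exact hu b hbu
    have h_alg : ∀ b ∈ u.erase a,
        IsAlgebraic ↥(adjoin ↥(adjoin F ({a} : Set E))
          ((S.erase s : Finset E) : Set E)) b := by
      intro b hb
      obtain ⟨hba, hbu⟩ := Finset.mem_erase.1 hb
      rw [alg_base_change']
      have hbS : IsAlgebraic ↥(adjoin F
          (insert s (({a} : Set E) ∪ ((S.erase s : Finset E) : Set E)))) b := by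
        refine alg_mono ?_ (halg b hbu)
        intro y hy
        by_cases hys : y = s
        · rw [hys]; exact Set.mem_insert s _
        · refine Set.mem_insert_iff.2 (Or.inr (Or.inr ?_))
          rw [Finset.coe_erase]
          exact ⟨hy, hys⟩
      exact alg_trans_insert hs_alg2 hbS
    have key := ih ↥(adjoin F ({a} : Set E)) (S.erase s) (u.erase a) hcards h_indep h_alg
    rw [← Finset.card_erase_add_one ha]
    omega

theorem member_isAlgebraic {S : Set E} {x : E} (h : x ∈ adjoin F S) :
    IsAlgebraic ↥(adjoin F S) x :=
  isAlgebraic_algebraMap (⟨x, h⟩ : ↥(adjoin F S))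

theorem steinitz_set [DecidableEq E] {s' : Set E}
    (hs' : AlgebraicIndependent F ((↑) : s' → E)) (S : Finset E)
    (halg : ∀ a ∈ s', IsAlgebraic ↥(adjoin F (S : Set E)) a) :
    Cardinal.mk s' ≤ S.card := by
  have hfinsub : ∀ u : Finset E, (u : Set E) ⊆ s' → u.card ≤ S.card := by
    intro u hsub
    refine my_steinitz S.card F S u le_rfl ?_ (fun a hau => halg a (hsub hau))
    intro a hau
    have h1 := algIndep_erase_transcendental (hs'.mono hsub) hau
    rwa [show ((u : Set E) \ {a}) = ((u.erase a : Finset E) : Set E) by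
      rw [Finset.coe_erase]] at h1
  have hfin : s'.Finite := by
    by_contra hinf
    obtain ⟨u, hsub, hcard⟩ :=
      Set.Infinite.exists_subset_card_eq hinf (S.card + 1)
    have := hfinsub u hsub
    omega
  haveI := hfin.fintype
  rw [Cardinal.mk_fintype]
  have h2 := hfinsub hfin.toFinset (by rw [Set.Finite.coe_toFinset])
  rw [Set.Finite.card_toFinset] at h2
  exact_mod_cast h2

theorem trdeg_le_of_algebraic (L : IntermediateField F E) (S : Finset E)
    (halg : ∀ y : ↥L, IsAlgebraic ↥(adjoin F (S : Set E)) (y : E)) :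
    trdeg F ↥L ≤ S.card := by
  classical
  haveI : Nonempty {s : Set ↥L // AlgebraicIndependent F ((↑) : s → ↥L)} :=
    ⟨⟨∅, algebraicIndependent_empty (K := F) (A := ↥L)⟩⟩
  refine ciSup_le' ?_
  rintro ⟨s, hs⟩
  have hcomp : AlgebraicIndependent F (fun x : s => ((x : ↥L) : E)) :=
    hs.map' (f := L.val) Subtype.val_injective
  have himg : AlgebraicIndependent F ((↑) : ((fun y : ↥L => (y : E)) '' s) → E) :=
    hcomp.image
  have hcard : Cardinal.mk s = Cardinal.mk ((fun y : ↥L => (y : E)) '' s) :=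
    (Cardinal.mk_image_eq Subtype.val_injective).symm
  rw [hcard]
  exact steinitz_set himg S (fun a ha => by
    obtain ⟨y, _, rfl⟩ := ha
    exact halg y)


theorem le_trdeg_of_subset (L : IntermediateField F E) {s : Set E} (hsL : s ⊆ (L : Set E))
    (hs : AlgebraicIndependent F ((↑) : s → E)) :
    Cardinal.mk s ≤ trdeg F ↥L := by
  let s₀ : Set ↥L := {y : ↥L | (y : E) ∈ s}
  have hg : ∀ y : s₀, ((y : ↥L) : E) ∈ s := fun y => y.2
  let g : s₀ → s := fun y => ⟨((y : ↥L) : E), hg y⟩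
  have hginj : Function.Injective g := by
    intro y1 y2 h
    exact Subtype.ext (Subtype.ext (Subtype.mk_eq_mk.1 h))
  have hgsurj : Function.Surjective g := by
    rintro ⟨a, ha⟩
    exact ⟨⟨⟨a, hsL ha⟩, ha⟩, rfl⟩
  have hcomp := hs.comp g hginj
  have hs₀ : AlgebraicIndependent F ((↑) : s₀ → ↥L) := by
    apply AlgebraicIndependent.of_comp L.val
    have he : (L.val ∘ ((↑) : s₀ → ↥L)) = ((↑) : s → E) ∘ g := rfl
    rwa [he]
  have hmk : Cardinal.mk s₀ = Cardinal.mk s :=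
    Cardinal.mk_congr (Equiv.ofBijective g ⟨hginj, hgsurj⟩)
  rw [← hmk]
  exact le_ciSup (Cardinal.bddAbove_range _)
    (⟨s₀, hs₀⟩ : {t : Set ↥L // AlgebraicIndependent F ((↑) : t → ↥L)})

theorem exists_max_algIndep (C : Set E) (hC : C.Finite) :
    ∃ T : Finset E, (T : Set E) ⊆ C ∧ AlgebraicIndependent F ((↑) : ↥(T : Set E) → E) ∧
      ∀ a ∈ C, IsAlgebraic ↥(adjoin F (T : Set E)) a := by
  classical
  obtain ⟨t, -, hmax⟩ := exists_maximal_algebraicIndependent (∅ : Set E) C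
    (Set.empty_subset C) (algebraicIndependent_empty (K := F) (A := E))
  obtain ⟨⟨ht_indep, htC⟩, hmaximal⟩ := hmax
  have htfin : t.Finite := hC.subset htC
  refine ⟨htfin.toFinset, by rw [Set.Finite.coe_toFinset]; exact htC, ?_, ?_⟩
  · rw [Set.Finite.coe_toFinset]; exact ht_indep
  · intro a haC
    rw [Set.Finite.coe_toFinset]
    by_cases hat : a ∈ t
    · exact member_isAlgebraic (subset_adjoin F t hat)
    · by_contra hna
      have htrans : Transcendental ↥(adjoin F t) a := hna
      have hins := algIndep_insert ht_indep hat htrans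
      have hsub : t ⊆ insert a t := Set.subset_insert a t
      have := hmaximal (y := insert a t) ⟨hins, Set.insert_subset haC htC⟩ hsub
      exact hat (this (Set.mem_insert a t))

theorem le_trdeg_of_algHom {L : Type u} [Field L] [Algebra F L] (ι : L →ₐ[F] E)
    (hinj : Function.Injective ι) {s : Set E} (hsL : s ⊆ Set.range ι)
    (hs : AlgebraicIndependent F ((↑) : s → E)) :
    Cardinal.mk s ≤ trdeg F L := by
  let s₀ : Set L := {y : L | ι y ∈ s}
  have hg : ∀ y : s₀, ι (y : L) ∈ s := fun y => y.2
  let g : s₀ → s := fun y => ⟨ι (y : L), hg y⟩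
  have hginj : Function.Injective g := by
    intro y1 y2 h
    exact Subtype.ext (hinj (Subtype.mk_eq_mk.1 h))
  have hgsurj : Function.Surjective g := by
    rintro ⟨a, ha⟩
    obtain ⟨y, rfl⟩ := hsL ha
    exact ⟨⟨y, ha⟩, rfl⟩
  have hcomp := hs.comp g hginj
  have hs₀ : AlgebraicIndependent F ((↑) : s₀ → L) := by
    apply AlgebraicIndependent.of_comp ι
    have he : (ι ∘ ((↑) : s₀ → L)) = ((↑) : s → E) ∘ g := rfl
    rwa [he]
  have hmk : Cardinal.mk s₀ = Cardinal.mk s :=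
    Cardinal.mk_congr (Equiv.ofBijective g ⟨hginj, hgsurj⟩)
  rw [← hmk]
  exact le_ciSup (Cardinal.bddAbove_range _)
    (⟨s₀, hs₀⟩ : {t : Set L // AlgebraicIndependent F ((↑) : t → L)})

theorem algebraic_of_mem_adjoin {S T : Set E} (h : ∀ a ∈ S, IsAlgebraic ↥(adjoin F T) a)
    {x : E} (hx : x ∈ adjoin F S) : IsAlgebraic ↥(adjoin F T) x := by
  haveI halg : Algebra.IsAlgebraic ↥(adjoin F T) ↥(adjoin ↥(adjoin F T) S) :=
    IntermediateField.isAlgebraic_adjoin (fun a ha => (h a ha).isIntegral)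
  have hx2 : x ∈ adjoin ↥(adjoin F T) S := by
    have hle : adjoin F S ≤ (adjoin ↥(adjoin F T) S).restrictScalars F :=
      adjoin_le_iff.2 (fun a ha =>
        (IntermediateField.mem_restrictScalars F).2 (subset_adjoin _ _ ha))
    rw [← IntermediateField.mem_restrictScalars F]
    exact hle hx
  exact IsAlgebraic.algHom (adjoin ↥(adjoin F T) S).val
    (Algebra.IsAlgebraic.isAlgebraic (⟨x, hx2⟩ : ↥(adjoin ↥(adjoin F T) S)))

/-- Assume Schanuel's conjecture.  Let `K ⊆ ℂ` be a subfield whose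
transcendence degree over `ℚ` is a finite number `d`.  Then for any complex
numbers `x₁, …, xₙ`:
`lin.dim_K(x₁,…,xₙ,2πi) + tr.deg(exp x₁,…, exp xₙ) − lin.dim_ℚ(x₁,…,xₙ,2πi) ≥ −(d+1)`
(an inequality of integers; the transcendence degree of the finitely generated field
`ℚ(exp x₁,…,exp xₙ)` is finite, so it is taken as a natural number via `Cardinal.toNat`).
This expresses that, relative to the kernel `2πiℤ` of `exp`, the predimension of any
finite set is bounded below by `−(d+1)`. -/
theorem statement10 (hSch : SchanuelConjecture) (K : Subfield ℂ) (d : ℕ)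
    (hK : trdeg ℚ K = d) (n : ℕ) (x : Fin n → ℂ) :
    ((Module.finrank K ↥(Submodule.span K
          (Set.range x ∪ {2 * (Real.pi : ℂ) * Complex.I})) : ℤ)
        + ((trdeg ℚ ↥(IntermediateField.adjoin ℚ
            (Set.range fun i => Complex.exp (x i)))).toNat : ℤ)
        - (Module.finrank ℚ ↥(Submodule.span ℚ
          (Set.range x ∪ {2 * (Real.pi : ℂ) * Complex.I})) : ℤ))
      ≥ -((d : ℤ) + 1) := by
  classical
  set g : Set ℂ := Set.range x ∪ {2 * (Real.pi : ℂ) * Complex.I} with hgdef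
  have hg_fin : g.Finite := (Set.finite_range x).union (Set.finite_singleton _)
  obtain ⟨b, hb_sub, hb_span, hb_li⟩ := exists_linearIndependent ↥K g
  have hb_fin : b.Finite := hg_fin.subset hb_sub
  have hb_liQ : LinearIndependent ℚ ((↑) : b → ℂ) := by
    refine hb_li.restrict_scalars ?_
    have hfe : (fun r : ℚ => r • (1 : ↥K)) = fun r => algebraMap ℚ ↥K r :=
      funext fun r => (Algebra.algebraMap_eq_smul_one r).symm
    rw [hfe]
    exact (algebraMap ℚ ↥K).injective
  have hb_liQ' : LinearIndepOn ℚ id b := hb_liQ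
  set z : Set ℂ := hb_liQ'.extend hb_sub with hzdef
  have hz_sub : z ⊆ g := hb_liQ'.extend_subset hb_sub
  have hbz : b ⊆ z := hb_liQ'.subset_extend hb_sub
  have hz_li : LinearIndependent ℚ ((↑) : z → ℂ) := hb_liQ'.linearIndepOn_extend hb_sub
  have hz_span : Submodule.span ℚ z = Submodule.span ℚ g :=
    hb_liQ'.span_extend_eq_span hb_sub
  have hz_fin : z.Finite := hg_fin.subset hz_sub
  haveI := hz_fin.fintype
  haveI := hb_fin.fintype
  -- finrank facts
  have hm : Module.finrank ℚ ↥(Submodule.span ℚ g) = z.toFinset.card := by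
    rw [← hz_span]; exact finrank_span_set_eq_card hz_li
  have hk : Module.finrank ↥K ↥(Submodule.span ↥K g) = b.toFinset.card := by
    rw [← hb_span]; exact finrank_span_set_eq_card hb_li
  -- Schanuel applied to an enumeration of z
  set m := z.toFinset.card with hmdef
  have hcardz : Fintype.card ↥z = m := (Set.toFinset_card z).symm
  let e : Fin m ≃ ↥z := (Fintype.equivFinOfCardEq hcardz).symm
  let f : Fin m → ℂ := fun i => ((e i : ℂ))
  have hf_li : LinearIndependent ℚ f := hz_li.comp e e.injective
  have hSch_app := hSch m f hf_li
  have hrangef : Set.range f = z := by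
    have h1 : Set.range f = Subtype.val '' Set.range e := by
      rw [← Set.range_comp]; rfl
    rw [h1, Equiv.range_eq_univ, Set.image_univ, Subtype.range_coe]
  have hrangeexp : (Set.range fun i => Complex.exp (f i)) = Complex.exp '' z := by
    have h1 : (Set.range fun i => Complex.exp (f i)) = Complex.exp '' Set.range f := by
      rw [← Set.range_comp]; rfl
    rw [h1, hrangef]
  have hsets : (Set.range f ∪ Set.range fun i => Complex.exp (f i))
      = z ∪ Complex.exp '' z := by rw [hrangef, hrangeexp]
  have hSch_app2 : (m : Cardinal) ≤ trdeg ℚ ↥(IntermediateField.adjoin ℚ (z ∪ Complex.exp '' z)) :=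
    hSch_app.trans_eq (congrArg (fun S : Set ℂ => trdeg ℚ ↥(IntermediateField.adjoin ℚ S)) hsets)
  -- transcendence basis of the exponentials
  obtain ⟨Texp, hTexp_sub, hTexp_ind, hTexp_alg⟩ :=
    exists_max_algIndep (F := ℚ) (Set.range fun i => Complex.exp (x i)) (Set.finite_range _)
  set E₁ := IntermediateField.adjoin ℚ (Set.range fun i => Complex.exp (x i)) with hE₁
  have hTexp_le : (Texp.card : Cardinal) ≤ trdeg ℚ ↥E₁ := by
    have h1 := le_trdeg_of_subset E₁ (s := (Texp : Set ℂ))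
      (fun a ha => IntermediateField.subset_adjoin ℚ _ (hTexp_sub ha)) hTexp_ind
    rw [← Cardinal.mk_coe_finset (s := Texp)]
    exact h1
  set Sexp : Finset ℂ := Finset.image (fun i => Complex.exp (x i)) Finset.univ with hSexp
  have hSexp_coe : (Sexp : Set ℂ) = Set.range fun i => Complex.exp (x i) := by
    simp [hSexp]
  have h_trdeg_fin : trdeg ℚ ↥E₁ ≤ (Sexp.card : Cardinal) := by
    refine trdeg_le_of_algebraic E₁ Sexp (fun y => ?_)
    rw [hSexp_coe]
    exact member_isAlgebraic y.2
  have h_lt : trdeg ℚ ↥E₁ < Cardinal.aleph0 :=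
    h_trdeg_fin.trans_lt (Cardinal.nat_lt_aleph0 _)
  have hTexp_card_le : Texp.card ≤ (trdeg ℚ ↥E₁).toNat := by
    have h1 := Cardinal.toNat_le_toNat hTexp_le h_lt
    rwa [Cardinal.toNat_natCast] at h1
  -- coefficients
  have key : ∀ w ∈ z, ∃ Cw : Finset ℂ, (Cw : Set ℂ) ⊆ (K : Set ℂ) ∧
      w ∈ IntermediateField.adjoin ℚ ((Cw : Set ℂ) ∪ b) := by
    intro w hw
    have hwspan : w ∈ Submodule.span ↥K b := by
      rw [hb_span]; exact Submodule.subset_span (hz_sub hw)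
    obtain ⟨c, hc_sup, hc_sum⟩ := Submodule.mem_span_set.1 hwspan
    refine ⟨Finset.image (fun v => ((c v : ↥K) : ℂ)) c.support, ?_, ?_⟩
    · intro y hy
      simp only [Finset.coe_image, Set.mem_image, Finset.mem_coe] at hy
      obtain ⟨v, hv, rfl⟩ := hy
      exact (c v).2
    · rw [← hc_sum]
      rw [Finsupp.sum]
      refine sum_mem (fun v hv => ?_)
      rw [Algebra.smul_def]
      refine mul_mem ?_ ?_
      · exact IntermediateField.subset_adjoin ℚ _
          (Or.inl (Finset.mem_coe.2 (Finset.mem_image_of_mem _ hv)))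
      · exact IntermediateField.subset_adjoin ℚ _ (Or.inr (hc_sup hv))
  choose Cw hCw_sub hCw_mem using key
  set C : Finset ℂ := z.toFinset.attach.biUnion
    (fun w => Cw w.1 (Set.mem_toFinset.1 w.2)) with hCdef
  have hC_sub : (C : Set ℂ) ⊆ (K : Set ℂ) := by
    intro y hy
    rw [Finset.mem_coe, hCdef, Finset.mem_biUnion] at hy
    obtain ⟨w, -, hy⟩ := hy
    exact hCw_sub _ _ hy
  have hC_mem : ∀ w ∈ z, w ∈ IntermediateField.adjoin ℚ ((C : Set ℂ) ∪ b) := by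
    intro w hw
    refine IntermediateField.adjoin.mono ℚ _ _ ?_ (hCw_mem w hw)
    refine Set.union_subset_union ?_ subset_rfl
    intro v hv
    rw [Finset.mem_coe, hCdef, Finset.mem_biUnion]
    exact ⟨⟨w, Set.mem_toFinset.2 hw⟩, Finset.mem_attach _ _, hv⟩
  -- transcendence basis of the coefficients
  obtain ⟨TC, hTC_sub, hTC_ind, hTC_alg⟩ :=
    exists_max_algIndep (F := ℚ) (C : Set ℂ) C.finite_toSet
  have hTC_card : (TC.card : Cardinal) ≤ trdeg ℚ ↥K := by
    have hrange : Set.range (K.subtype.toRatAlgHom : ↥K →ₐ[ℚ] ℂ) = (K : Set ℂ) := by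
      ext y; exact ⟨fun ⟨w, hw⟩ => hw ▸ w.2, fun hy => ⟨⟨y, hy⟩, rfl⟩⟩
    have h1 := le_trdeg_of_algHom (K.subtype.toRatAlgHom) Subtype.val_injective
      (s := (TC : Set ℂ)) (by rw [hrange]; exact fun a ha => hC_sub (hTC_sub ha)) hTC_ind
    rw [← Cardinal.mk_coe_finset (s := TC)]
    exact h1
  have hTC_card_nat : TC.card ≤ d := by
    rw [hK] at hTC_card
    exact_mod_cast hTC_card
  -- assemble
  set Sfin : Finset ℂ := TC ∪ b.toFinset ∪ Texp with hSfin
  have hTC_Sfin : (TC : Set ℂ) ⊆ (Sfin : Set ℂ) := by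
    intro a ha; simp [hSfin]; tauto
  have hb_Sfin : b ⊆ (Sfin : Set ℂ) := by
    intro a ha
    simp only [hSfin, Finset.coe_union, Set.mem_union, Finset.mem_coe, Set.mem_toFinset]
    exact Or.inl (Or.inr ha)
  have hTexp_Sfin : (Texp : Set ℂ) ⊆ (Sfin : Set ℂ) := by
    intro a ha; simp [hSfin]; tauto
  have hgen : ∀ y ∈ z ∪ Complex.exp '' z,
      IsAlgebraic ↥(IntermediateField.adjoin ℚ (Sfin : Set ℂ)) y := by
    rintro y (hy | ⟨w, hw, rfl⟩)
    · refine algebraic_of_mem_adjoin (S := (C : Set ℂ) ∪ b) ?_ (hC_mem y hy)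
      rintro a (ha | ha)
      · exact alg_mono hTC_Sfin (hTC_alg a ha)
      · exact member_isAlgebraic (IntermediateField.subset_adjoin ℚ _ (hb_Sfin ha))
    · rcases hz_sub hw with ⟨i, rfl⟩ | hw2
      · exact alg_mono hTexp_Sfin (hTexp_alg _ ⟨i, rfl⟩)
      · rw [Set.mem_singleton_iff.1 hw2, Complex.exp_two_pi_mul_I]
        exact isAlgebraic_one
  have h_upper : trdeg ℚ ↥(IntermediateField.adjoin ℚ (z ∪ Complex.exp '' z))
      ≤ (Sfin.card : Cardinal) :=
    trdeg_le_of_algebraic _ Sfin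
      (fun y => algebraic_of_mem_adjoin hgen y.2)
  have hm_le : (m : Cardinal) ≤ (Sfin.card : Cardinal) := hSch_app2.trans h_upper
  have hm_le_nat : m ≤ Sfin.card := by exact_mod_cast hm_le
  have hSfin_card : Sfin.card ≤ TC.card + b.toFinset.card + Texp.card := by
    refine (Finset.card_union_le _ _).trans ?_
    exact Nat.add_le_add_right (Finset.card_union_le _ _) _
  rw [hm, hk]
  have hbc : b.toFinset.card ≤ m := by
    refine Finset.card_le_card ?_
    intro a ha
    exact Set.mem_toFinset.2 (hbz (Set.mem_toFinset.1 ha))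
  omega
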